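/- If a bridge B = ((L₁,T₁),(L₂,T₂),σ) admits an elimination, then it satisfies (mon): for all M, M' ⊨ T₂ with Th_{L₁}(σM) ⊆ Th_{L₁}(σM'), we have Th_{L₂}(M) ⊆ Th_{L₂}(M'). Conversely, if B admits an interpretation ι and satisfies (mon), then B admits an elimination. -/
import Mathlib


open FirstOrder Set

universe u v w u₁ v₁ u₂ v₂

namespace PaperStmt

/-- An `𝔏`-fragment: a set of `𝔏`-sentences containing `⊤` and `⊥` and
closed under `∧` and `∨`. -/
def IsFragment {L : FirstOrder.Language.{u, v}} (F : Set L.Sentence) : Prop :=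
  (⊤ : L.Sentence) ∈ F ∧ (⊥ : L.Sentence) ∈ F ∧
    ∀ φ ψ : L.Sentence, φ ∈ F → ψ ∈ F → (φ ⊓ ψ) ∈ F ∧ (φ ⊔ ψ) ∈ F

/-- `T_F = T^⊢ ∩ F`: the consequences of the theory `T` that lie in the fragment `F`. -/
def cons {L : FirstOrder.Language.{u, v}} (T : L.Theory) (F : Set L.Sentence) :
    Set L.Sentence :=
  {φ | φ ∈ F ∧ T ⊨ᵇ φ}

/-- Bundled models of `T` (in the universe matching semantic consequence `⊨ᵇ`). -/
abbrev Mod {L : FirstOrder.Language.{u, v}} (T : L.Theory) : Type (max u v + 1) :=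
  FirstOrder.Language.Theory.ModelType.{u, v, max u v} T

/-- `Th_F(M)`: the sentences in the fragment `F` true in the model `M`. -/
def th {L : FirstOrder.Language.{u, v}} {T : L.Theory} (F : Set L.Sentence) (M : Mod T) :
    Set L.Sentence :=
  {φ | φ ∈ F ∧ M ⊨ φ}

lemma exists_inf {L : FirstOrder.Language.{u, v}} {F : Set L.Sentence} (hF : IsFragment F)
    (s : Finset L.Sentence) (hs : ↑s ⊆ F) :
    ∃ β ∈ F, ∀ (M : Type w) [L.Structure M], (M ⊨ β ↔ ∀ φ ∈ s, M ⊨ φ) := by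
  classical
  induction s using Finset.induction_on with
  | empty =>
      exact ⟨⊤, hF.1, fun M _ => by
        simp [Language.Sentence.Realize, Language.Formula.realize_top]⟩
  | @insert φ s hφ ih =>
      obtain ⟨β, hβF, hβ⟩ := ih (fun x hx => hs (by simp [hx]))
      refine ⟨φ ⊓ β, (hF.2.2 φ β (hs (by simp)) hβF).1, fun M _ => ?_⟩
      simp only [Finset.mem_insert, Language.Sentence.Realize, Language.Formula.realize_inf]
      constructor
      · rintro ⟨h1, h2⟩ χ (rfl | hχ)
        · exact h1
        · exact (hβ M).1 h2 χ hχ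
      · intro h
        exact ⟨h φ (Or.inl rfl), (hβ M).2 fun χ hχ => h χ (Or.inr hχ)⟩

lemma exists_sup {L : FirstOrder.Language.{u, v}} {F : Set L.Sentence} (hF : IsFragment F)
    (s : Finset L.Sentence) (hs : ↑s ⊆ F) :
    ∃ β ∈ F, ∀ (M : Type w) [L.Structure M], (M ⊨ β ↔ ∃ φ ∈ s, M ⊨ φ) := by
  classical
  induction s using Finset.induction_on with
  | empty =>
      exact ⟨⊥, hF.2.1, fun M _ => by
        simp [Language.Sentence.Realize, Language.Formula.realize_bot]⟩
  | @insert φ s hφ ih =>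
      obtain ⟨β, hβF, hβ⟩ := ih (fun x hx => hs (by simp [hx]))
      refine ⟨φ ⊔ β, (hF.2.2 φ β (hs (by simp)) hβF).2, fun M _ => ?_⟩
      simp only [Finset.mem_insert, Language.Sentence.Realize, Language.Formula.realize_sup]
      constructor
      · rintro (h1 | h2)
        · exact ⟨φ, Or.inl rfl, h1⟩
        · obtain ⟨χ, hχ, h⟩ := (hβ M).1 h2
          exact ⟨χ, Or.inr hχ, h⟩
      · rintro ⟨χ, (rfl | hχ), h⟩
        · exact Or.inl h
        · exact Or.inr ((hβ M).2 ⟨χ, hχ, h⟩)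

lemma finset_unsat {L : FirstOrder.Language.{u, v}} {T : L.Theory}
    (h : ¬ T.IsSatisfiable) :
    ∃ T0 : Finset L.Sentence, ↑T0 ⊆ T ∧ ¬ Language.Theory.IsSatisfiable (↑T0 : L.Theory) := by
  by_contra hc
  push_neg at hc
  exact h (Language.Theory.isSatisfiable_iff_isFinitelySatisfiable.2 fun T0 hT0 => hc T0 hT0)

/-- a bridge admitting an elimination satisfies (mon); conversely a bridge
admitting an interpretation and satisfying (mon) admits an elimination. -/
theorem statement_5 {L₁ : FirstOrder.Language.{u₁, v₁}} {L₂ : FirstOrder.Language.{u₂, v₂}}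
    {F₁ : Set L₁.Sentence} {F₂ : Set L₂.Sentence} {T₁ : L₁.Theory} {T₂ : L₂.Theory}
    (hF₁ : IsFragment F₁) (hF₂ : IsFragment F₂)
    (σ : Mod T₂ → Mod T₁) :
    ((∃ ε : L₂.Sentence → L₁.Sentence, (∀ ψ ∈ F₂, ε ψ ∈ F₁) ∧
        ∀ ψ ∈ F₂, ∀ M : Mod T₂, (σ M ⊨ ε ψ ↔ M ⊨ ψ)) →
      ∀ M M' : Mod T₂, th F₁ (σ M) ⊆ th F₁ (σ M') → th F₂ M ⊆ th F₂ M') ∧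
    ((∃ ι : L₁.Sentence → L₂.Sentence, (∀ φ ∈ F₁, ι φ ∈ F₂) ∧
        ∀ φ ∈ F₁, ∀ M : Mod T₂, (σ M ⊨ φ ↔ M ⊨ ι φ)) →
      (∀ M M' : Mod T₂, th F₁ (σ M) ⊆ th F₁ (σ M') → th F₂ M ⊆ th F₂ M') →
      ∃ ε : L₂.Sentence → L₁.Sentence, (∀ ψ ∈ F₂, ε ψ ∈ F₁) ∧
        ∀ ψ ∈ F₂, ∀ M : Mod T₂, (σ M ⊨ ε ψ ↔ M ⊨ ψ)) := by
  classical
  constructor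
  · rintro ⟨ε, hεF, hε⟩ M M' hsub ψ ⟨hψF, hψ⟩
    refine ⟨hψF, (hε ψ hψF M').1 ?_⟩
    exact (hsub ⟨hεF ψ hψF, (hε ψ hψF M).2 hψ⟩).2
  · rintro ⟨ι, hιF, hι⟩ mon
    have key : ∀ ψ ∈ F₂, ∃ χ ∈ F₁, ∀ M : Mod T₂, (σ M ⊨ χ ↔ M ⊨ ψ) := by
      intro ψ hψ
      -- Claim A: each model of ψ has a separating sentence implying ψ.
      have claimA : ∀ M : Mod T₂, M ⊨ ψ → ∃ β ∈ F₁, (σ M ⊨ β) ∧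
          ∀ N : Mod T₂, σ N ⊨ β → N ⊨ ψ := by
        intro M hMψ
        set Γ : L₂.Theory := T₂ ∪ (ι '' th F₁ (σ M)) ∪ {ψ.not} with hΓ
        have hunsat : ¬ Γ.IsSatisfiable := by
          rintro ⟨K⟩
          haveI hKT : K ⊨ T₂ := K.is_model.mono (fun x hx => Or.inl (Or.inl hx))
          set N : Mod T₂ := ⟨K.Carrier⟩ with hN
          have hsub : th F₁ (σ M) ⊆ th F₁ (σ N) := by
            rintro α ⟨hαF, hα⟩
            refine ⟨hαF, (hι α hαF N).2 ?_⟩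
            exact Language.Theory.realize_sentence_of_mem (M := K) Γ
              (Or.inl (Or.inr ⟨α, ⟨hαF, hα⟩, rfl⟩))
          have hNψ : N ⊨ ψ := (mon M N hsub ⟨hψ, hMψ⟩).2
          have hnot : K ⊨ ψ.not :=
            Language.Theory.realize_sentence_of_mem Γ (Or.inr rfl)
          exact ((Language.Sentence.realize_not _).1 hnot) hNψ
        obtain ⟨T0, hT0sub, hT0unsat⟩ := finset_unsat hunsat
        have hdec : DecidablePred (· ∈ ι '' th F₁ (σ M)) := fun _ => Classical.dec _
        let f : L₂.Sentence → L₁.Sentence := fun γ =>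
          if h : γ ∈ ι '' th F₁ (σ M) then h.choose else ⊤
        have hf : ∀ γ ∈ ι '' th F₁ (σ M), f γ ∈ th F₁ (σ M) ∧ ι (f γ) = γ := by
          intro γ hγ
          simp only [f, dif_pos hγ]
          exact ⟨hγ.choose_spec.1, hγ.choose_spec.2⟩
        let s : Finset L₁.Sentence := (T0.filter (· ∈ ι '' th F₁ (σ M))).image f
        have hsth : ↑s ⊆ th F₁ (σ M) := by
          intro α hα
          simp only [s, Finset.coe_image, Set.mem_image, Finset.coe_filter,
            Set.mem_setOf_eq] at hα
          obtain ⟨γ, ⟨_, hγ2⟩, rfl⟩ := hα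
          exact (hf γ hγ2).1
        obtain ⟨β, hβF, hβ⟩ := exists_inf hF₁ s (fun α hα => (hsth hα).1)
        refine ⟨β, hβF, (hβ (σ M)).2 fun α hα => (hsth hα).2, ?_⟩
        intro N hNβ
        by_contra hNψ
        have hmod : (N : Type (max u₂ v₂)) ⊨ (↑T0 : L₂.Theory) := by
          refine (Language.Theory.model_iff _).2 fun γ hγ => ?_
          rcases hT0sub hγ with ((hγT | hγι) | hγn)
          · exact Language.Theory.realize_sentence_of_mem T₂ hγT
          · have hfs : f γ ∈ s := Finset.mem_image_of_mem f
              (Finset.mem_filter.2 ⟨hγ, hγι⟩)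
            have : (σ N : Type (max u₁ v₁)) ⊨ f γ := (hβ (σ N)).1 hNβ (f γ) hfs
            have := (hι (f γ) ((hf γ hγι).1).1 N).1 this
            rwa [(hf γ hγι).2] at this
          · rw [Set.mem_singleton_iff.1 hγn]
            exact (Language.Sentence.realize_not _).2 hNψ
        exact hT0unsat (Language.Theory.Model.isSatisfiable N)
      -- Claim B: compactness over all models of ψ.
      set D : Set L₁.Sentence :=
        {β | β ∈ F₁ ∧ ∀ N : Mod T₂, σ N ⊨ β → N ⊨ ψ} with hD
      set Γ' : L₂.Theory := T₂ ∪ ((fun β => (ι β).not) '' D) ∪ {ψ} with hΓ'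
      have hunsat' : ¬ Γ'.IsSatisfiable := by
        rintro ⟨K⟩
        haveI hKT : K ⊨ T₂ := K.is_model.mono (fun x hx => Or.inl (Or.inl hx))
        set N : Mod T₂ := ⟨K.Carrier⟩ with hN
        have hNψ : N ⊨ ψ := Language.Theory.realize_sentence_of_mem (M := K) Γ' (Or.inr rfl)
        obtain ⟨β, hβF, hβN, hβimp⟩ := claimA N hNψ
        have hmem : (ι β).not ∈ Γ' := Or.inl (Or.inr ⟨β, ⟨hβF, hβimp⟩, rfl⟩)
        have hnot : K ⊨ (ι β).not := Language.Theory.realize_sentence_of_mem Γ' hmem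
        exact ((Language.Sentence.realize_not _).1 hnot) ((hι β hβF N).1 hβN)
      obtain ⟨T0, hT0sub, hT0unsat⟩ := finset_unsat hunsat'
      let g : L₂.Sentence → L₁.Sentence := fun γ =>
        if h : γ ∈ (fun β => (ι β).not) '' D then h.choose else ⊥
      have hg : ∀ γ ∈ (fun β => (ι β).not) '' D, g γ ∈ D ∧ (ι (g γ)).not = γ := by
        intro γ hγ
        simp only [g, dif_pos hγ]
        exact ⟨hγ.choose_spec.1, hγ.choose_spec.2⟩
      let s : Finset L₁.Sentence := (T0.filter (· ∈ (fun β => (ι β).not) '' D)).image g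
      have hsD : ↑s ⊆ D := by
        intro α hα
        simp only [s, Finset.coe_image, Set.mem_image, Finset.coe_filter,
          Set.mem_setOf_eq] at hα
        obtain ⟨γ, ⟨_, hγ2⟩, rfl⟩ := hα
        exact (hg γ hγ2).1
      obtain ⟨χ, hχF, hχ⟩ := exists_sup hF₁ s (fun α hα => (hsD hα).1)
      refine ⟨χ, hχF, fun M => ⟨?_, ?_⟩⟩
      · intro hMχ
        obtain ⟨α, hα, hMα⟩ := (hχ (σ M)).1 hMχ
        exact (hsD hα).2 M hMα
      · intro hMψ
        by_contra hMχ
        have hmod : (M : Type (max u₂ v₂)) ⊨ (↑T0 : L₂.Theory) := by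
          refine (Language.Theory.model_iff _).2 fun γ hγ => ?_
          rcases hT0sub hγ with ((hγT | hγι) | hγs)
          · exact Language.Theory.realize_sentence_of_mem T₂ hγT
          · have hgs : g γ ∈ s := Finset.mem_image_of_mem g
              (Finset.mem_filter.2 ⟨hγ, hγι⟩)
            have hnM : ¬ (σ M : Type (max u₁ v₁)) ⊨ g γ := fun h =>
              hMχ ((hχ (σ M)).2 ⟨g γ, hgs, h⟩)
            have : ¬ (M : Type (max u₂ v₂)) ⊨ ι (g γ) := fun h =>
              hnM ((hι (g γ) ((hsD hgs).1) M).2 h)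
            rw [← (hg γ hγι).2]
            exact (Language.Sentence.realize_not _).2 this
          · rw [Set.mem_singleton_iff.1 hγs]
            exact hMψ
        exact hT0unsat (Language.Theory.Model.isSatisfiable M)
    refine ⟨fun ψ => if h : ψ ∈ F₂ then (key ψ h).choose else ⊥, ?_, ?_⟩
    · intro ψ hψ
      simp only [dif_pos hψ]
      exact (key ψ hψ).choose_spec.1
    · intro ψ hψ M
      simp only [dif_pos hψ]
      exact (key ψ hψ).choose_spec.2 M
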